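/- Let ξ ∈ Φ with φ_min(ξ) > 0 and λ_L^s = λ_R^s; write λ = λ_R^s. Define γ : ℝ → ℝ² by γ(z) = (z/(1 − λ), (1 − z)·λ/(1 − λ)), and let Γ = {γ(z) : z ∈ [λ_R^u + 1, 1]}. Then: (i) γ(1) = T = (1/(1 − λ_R^s), 0) and γ(λ_R^u + 1) = f_ξ(T), so Γ is the line segment from T to f_ξ(T); (ii) for every z ∈ [λ_R^u + 1, 1], f_ξ(γ(z)) = γ(s_{λ_L^u, λ_R^u}(z)), where s_{λ_L^u, λ_R^u} is the skew tent map with parameters (λ_L^u, λ_R^u); and (iii) f_ξ(Γ) ⊆ Γ, i.e. f_ξ is forward invariant on Γ. -/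

import Mathlib

noncomputable section

/-- Parameters ξ = (τL, δL, τR, δR) of the 2D border-collision normal form. -/
structure Param where
  tL : ℝ
  dL : ℝ
  tR : ℝ
  dR : ℝ

/-- The region Φ where the BCNF has two saddle fixed points. -/
def Phi (ξ : Param) : Prop := |ξ.dL + 1| < ξ.tL ∧ ξ.tR < -|ξ.dR + 1|

/-- The 2D border-collision normal form map. -/
def fBC (ξ : Param) (p : ℝ × ℝ) : ℝ × ℝ :=
  if p.1 ≤ 0 then (ξ.tL * p.1 + p.2 + 1, -ξ.dL * p.1)
  else (ξ.tR * p.1 + p.2 + 1, -ξ.dR * p.1)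

def lamLu (ξ : Param) : ℝ := (ξ.tL + Real.sqrt (ξ.tL^2 - 4*ξ.dL)) / 2
def lamLs (ξ : Param) : ℝ := (ξ.tL - Real.sqrt (ξ.tL^2 - 4*ξ.dL)) / 2
def lamRu (ξ : Param) : ℝ := (ξ.tR - Real.sqrt (ξ.tR^2 - 4*ξ.dR)) / 2
def lamRs (ξ : Param) : ℝ := (ξ.tR + Real.sqrt (ξ.tR^2 - 4*ξ.dR)) / 2

/-- The renormalisation operator g. -/
def gmap (ξ : Param) : Param :=
  ⟨ξ.tR^2 - 2*ξ.dR, ξ.dR^2, ξ.tL*ξ.tR - ξ.dL - ξ.dR, ξ.dL*ξ.dR⟩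

def alphaF (ξ : Param) : ℝ := ξ.tL*ξ.tR + (ξ.dL - 1)*(ξ.dR - 1)

def phiPlus (ξ : Param) : ℝ :=
  ξ.dR - (ξ.tR + ξ.dL + ξ.dR - (1 + ξ.tR) * lamLu ξ) * lamLu ξ

def phiMinus (ξ : Param) : ℝ :=
  ξ.dR - (ξ.dR + ξ.tR - (1 + lamRu ξ) * lamLu ξ) * lamLu ξ

def phiMin (ξ : Param) : ℝ := min (phiPlus ξ) (phiMinus ξ)

/-- The skew tent map with parameters (a, b). -/
def stm (a b x : ℝ) : ℝ := if x ≤ 0 then a*x + 1 else b*x + 1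

/-- The set of points mapping into the right half-plane. -/
def PiSet (ξ : Param) : Set (ℝ × ℝ) := {p | 0 ≤ (fBC ξ p).1}

/-- The conjugating affine change of coordinates h_ξ. -/
def hMap (ξ : Param) (p : ℝ × ℝ) : ℝ × ℝ :=
  (p.1 / (ξ.tR + ξ.dR + 1), (ξ.dR * p.1 + ξ.tR * p.2 - ξ.dR) / (ξ.tR + ξ.dR + 1))

def Rset1 (n : ℕ) : Set Param :=
  {ξ | Phi ξ ∧ 0 < ξ.dL ∧ 0 < ξ.dR ∧ 0 < phiPlus (gmap^[n] ξ) ∧ phiPlus (gmap^[n+1] ξ) ≤ 0}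

def Rset2 (n : ℕ) : Set Param :=
  {ξ | Phi ξ ∧ ξ.dL < 0 ∧ ξ.dR < 0 ∧ 0 < phiPlus (gmap^[n] ξ) ∧
    phiPlus (gmap^[n+1] ξ) ≤ 0 ∧ alphaF ξ < 0}

def Rset3 (n : ℕ) : Set Param :=
  {ξ | Phi ξ ∧ 0 < ξ.dL ∧ ξ.dR < 0 ∧ 0 < phiMin (gmap^[n] ξ) ∧
    phiMin (gmap^[n+1] ξ) ≤ 0 ∧ alphaF ξ < 0}

def Rset4 (n : ℕ) : Set Param :=
  {ξ | Phi ξ ∧ ξ.dL < 0 ∧ 0 < ξ.dR ∧ 0 < phiMin (gmap^[n] ξ) ∧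
    phiMin (gmap^[n+1] ξ) ≤ 0 ∧ alphaF ξ < 0 ∧ alphaF (gmap ξ) < 0}

/-- Renormalisation operator for skew tent maps. -/
def g0 (p : ℝ × ℝ) : ℝ × ℝ := (p.2^2, p.1*p.2)
def phi0 (p : ℝ × ℝ) : ℝ := p.1*p.2 + p.1 - p.2
def alpha0 (p : ℝ × ℝ) : ℝ := p.1*p.2 + 1

/-- The regions R_n of skew tent map parameter space. -/
def RsetST (n : ℕ) : Set (ℝ × ℝ) :=
  {p | p.2 < -1 ∧ 0 < phi0 (g0^[n] p) ∧ phi0 (g0^[n+1] p) ≤ 0 ∧ alpha0 p < 0}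


private lemma discL_pos (ξ : Param) (hξ : Phi ξ) : 0 < ξ.tL^2 - 4*ξ.dL := by
  have h := hξ.1
  have h0 : 0 ≤ |ξ.dL + 1| := abs_nonneg _
  have hsq : (ξ.dL + 1)^2 = |ξ.dL + 1|^2 := (sq_abs _).symm
  nlinarith [sq_nonneg (ξ.dL - 1)]

private lemma discR_pos (ξ : Param) (hξ : Phi ξ) : 0 < ξ.tR^2 - 4*ξ.dR := by
  have h := hξ.2
  have h0 : 0 ≤ |ξ.dR + 1| := abs_nonneg _
  have hsq : (ξ.dR + 1)^2 = |ξ.dR + 1|^2 := (sq_abs _).symm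
  nlinarith [sq_nonneg (ξ.dR - 1)]

set_option maxHeartbeats 1000000 in
theorem stmt_17 (ξ : Param) (hξ : Phi ξ) (hphi : 0 < phiMin ξ)
    (heig : lamLs ξ = lamRs ξ) :
    let lam : ℝ := lamRs ξ
    let γ : ℝ → ℝ × ℝ := fun z => (z / (1 - lam), (1 - z) * lam / (1 - lam))
    let Γ : Set (ℝ × ℝ) := γ '' Set.Icc (lamRu ξ + 1) 1
    γ 1 = (1 / (1 - lamRs ξ), 0) ∧
    γ (lamRu ξ + 1) = fBC ξ (1 / (1 - lamRs ξ), 0) ∧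
    (∀ z ∈ Set.Icc (lamRu ξ + 1) 1,
      fBC ξ (γ z) = γ (stm (lamLu ξ) (lamRu ξ) z)) ∧
    fBC ξ '' Γ ⊆ Γ := by

  have h1 : ξ.dL + 1 < ξ.tL := lt_of_le_of_lt (le_abs_self _) hξ.1
  have h1' : -(ξ.dL + 1) < ξ.tL := lt_of_le_of_lt (neg_le_abs _) hξ.1
  have h2 : ξ.tR < -(ξ.dR + 1) := lt_of_lt_of_le hξ.2 (neg_le_neg (le_abs_self _))
  have h2' : ξ.tR < ξ.dR + 1 := by
    have := lt_of_lt_of_le hξ.2 (neg_le_neg (neg_le_abs _))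
    linarith
  have hdL := discL_pos ξ hξ
  have hdR := discR_pos ξ hξ
  have hsL : Real.sqrt (ξ.tL^2 - 4*ξ.dL) ^ 2 = ξ.tL^2 - 4*ξ.dL :=
    Real.sq_sqrt hdL.le
  have hsR : Real.sqrt (ξ.tR^2 - 4*ξ.dR) ^ 2 = ξ.tR^2 - 4*ξ.dR :=
    Real.sq_sqrt hdR.le
  have hsL0 : 0 < Real.sqrt (ξ.tL^2 - 4*ξ.dL) := Real.sqrt_pos.mpr hdL
  have hsR0 : 0 < Real.sqrt (ξ.tR^2 - 4*ξ.dR) := Real.sqrt_pos.mpr hdR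
  have hTL : lamLu ξ + lamRs ξ = ξ.tL := by
    rw [← heig, lamLu, lamLs]; ring
  have hDL : lamLu ξ * lamRs ξ = ξ.dL := by
    rw [← heig, lamLu, lamLs]
    linear_combination (-(1:ℝ)/4) * hsL
  have hTR : lamRu ξ + lamRs ξ = ξ.tR := by
    rw [lamRu, lamRs]; ring
  have hDR : lamRu ξ * lamRs ξ = ξ.dR := by
    rw [lamRu, lamRs]
    linear_combination (-(1:ℝ)/4) * hsR
  set u := lamLu ξ with hu_def
  set v := lamRu ξ with hv_def
  set l := lamRs ξ with hl_def
  have hu1 : 1 < u := by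
    rw [hu_def, lamLu]
    nlinarith [hsL, hsL0, h1]
  have hv1 : v < -1 := by
    rw [hv_def, lamRu]
    nlinarith [hsR, hsR0, h2]
  have hl1 : l < 1 := by
    rw [hl_def, lamRs]
    nlinarith [hsR, hsR0.le, h2']
  have hden : (0:ℝ) < 1 - l := by linarith
  have hne : (1:ℝ) - l ≠ 0 := ne_of_gt hden
  have hphiM : 0 < phiMinus ξ := lt_of_lt_of_le hphi (min_le_right _ _)
  have hfact : phiMinus ξ = (u - l) * (u*v + u - v) := by
    rw [phiMinus, ← hv_def, ← hu_def, ← hTR, ← hDR]; ring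
  have hA : 0 < u*v + u - v := by
    rw [hfact] at hphiM
    rcases mul_pos_iff.mp hphiM with ⟨_, hb⟩ | ⟨ha, _⟩
    · exact hb
    · linarith
  clear hsL hsR hsL0 hsR0 hdL hdR hfact hphiM hphi heig
  intro lam γ Γ
  have key : ∀ z ∈ Set.Icc (v + 1) 1, fBC ξ (γ z) = γ (stm u v z) := by
    rintro z ⟨hz1, hz2⟩
    by_cases hz0 : z ≤ 0
    · have hx : z / (1 - lam) ≤ 0 := div_nonpos_of_nonpos_of_nonneg hz0 hden.le
      show fBC ξ (z / (1 - lam), (1 - z) * lam / (1 - lam)) = _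
      rw [fBC, stm, if_pos hx, if_pos hz0]
      have hlam : lam = l := rfl
      simp only [γ, hlam]
      rw [← hTL, ← hDL]
      refine Prod.ext ?_ ?_ <;> (field_simp; try ring) <;> exact Or.inl trivial
    · have hzpos : 0 < z := not_le.mp hz0
      have hx : ¬ z / (1 - lam) ≤ 0 := not_le.mpr (div_pos hzpos hden)
      show fBC ξ (z / (1 - lam), (1 - z) * lam / (1 - lam)) = _
      rw [fBC, stm, if_neg hx, if_neg hz0]
      have hlam : lam = l := rfl
      simp only [γ, hlam]
      rw [← hTR, ← hDR]
      refine Prod.ext ?_ ?_ <;> (field_simp; try ring) <;> exact Or.inl trivial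
  have hγ1 : γ 1 = (1 / (1 - lamRs ξ), 0) := by
    show ((1:ℝ) / (1 - lam), (1 - 1) * lam / (1 - lam)) = _
    norm_num
    rfl
  refine ⟨hγ1, ?_, key, ?_⟩
  · have h1mem : (1:ℝ) ∈ Set.Icc (v + 1) 1 := ⟨by linarith, le_refl 1⟩
    have hk := key 1 h1mem
    rw [hγ1] at hk
    have hstm : stm u v 1 = v + 1 := by rw [stm, if_neg (by norm_num)]; ring
    rw [hstm] at hk
    exact hk.symm
  · rintro p ⟨q, ⟨z, hz, rfl⟩, rfl⟩
    rw [key z hz]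
    refine ⟨stm u v z, ?_, rfl⟩
    obtain ⟨hz1, hz2⟩ := hz
    rw [stm]
    have hu0 : (0:ℝ) < u := by linarith
    by_cases hz0 : z ≤ 0
    · rw [if_pos hz0]
      have hmul : u * (v + 1) ≤ u * z := mul_le_mul_of_nonneg_left hz1 hu0.le
      have hmul2 : u * z ≤ 0 := mul_nonpos_of_nonneg_of_nonpos hu0.le hz0
      constructor
      · nlinarith [hmul, hA]
      · linarith [hmul2]
    · rw [if_neg hz0]
      have hzpos : 0 < z := not_le.mp hz0
      have hm1 : 0 ≤ (1 - z) * (-v) := mul_nonneg (by linarith) (by linarith)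
      have hm2 : v * z ≤ 0 := mul_nonpos_of_nonpos_of_nonneg (by linarith) hzpos.le
      constructor
      · nlinarith [hm1]
      · linarith [hm2]
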